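/- arXiv:2204.08200 — 4 statements merged into one kernel-verified Lean document; each statement's English description precedes it below -/
import Mathlib

section
/- Let μ and ν be probability measures on ℝ^d × ℝ, let h : ℝ^d → ℝ be R-Lipschitz, and let ℓ : ℝ × ℝ → ℝ be ρ-Lipschitz in each argument, with R ≥ 0 and ρ ≥ 0. Let γ be any coupling of μ and ν, and assume the functions ((x,y),(x',y')) ↦ ℓ(h(x), y), ((x,y),(x',y')) ↦ ℓ(h(x'), y'), and ((x,y),(x',y')) ↦ ‖x − x'‖₂ + |y − y'| are integrable with respect to γ. Then |ε_μ(h) − ε_ν(h)| ≤ ρ·√(R² + 1)·∫ (‖x − x'‖₂ + |y − y'|) dγ((x,y),(x',y')). -/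
open MeasureTheory

/-- The population loss of classifier `h` under loss `ℓ` and distribution `μ`. -/
noncomputable def popLoss {d : ℕ} (ℓ : ℝ → ℝ → ℝ) (h : EuclideanSpace ℝ (Fin d) → ℝ)
    (μ : Measure (EuclideanSpace ℝ (Fin d) × ℝ)) : ℝ :=
  ∫ p, ℓ (h p.1) p.2 ∂μ

/-- coupling form of Lemma 4.1 (error difference over shifted domains). -/
theorem error_difference_coupling_bound
    {d : ℕ} (R ρ : ℝ) (hR : 0 ≤ R) (hρ : 0 ≤ ρ)
    (μ ν : Measure (EuclideanSpace ℝ (Fin d) × ℝ))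
    [IsProbabilityMeasure μ] [IsProbabilityMeasure ν]
    (h : EuclideanSpace ℝ (Fin d) → ℝ) (ℓ : ℝ → ℝ → ℝ)
    (hLip : ∀ x x' : EuclideanSpace ℝ (Fin d), |h x - h x'| ≤ R * ‖x - x'‖)
    (hℓ₁ : ∀ y y' z : ℝ, |ℓ y z - ℓ y' z| ≤ ρ * |y - y'|)
    (hℓ₂ : ∀ y y' z : ℝ, |ℓ z y - ℓ z y'| ≤ ρ * |y - y'|)
    (γ : Measure ((EuclideanSpace ℝ (Fin d) × ℝ) × (EuclideanSpace ℝ (Fin d) × ℝ)))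
    [IsProbabilityMeasure γ]
    (hγ₁ : γ.map Prod.fst = μ) (hγ₂ : γ.map Prod.snd = ν)
    (hint₁ : Integrable (fun q => ℓ (h q.1.1) q.1.2) γ)
    (hint₂ : Integrable (fun q => ℓ (h q.2.1) q.2.2) γ)
    (hintc : Integrable (fun q => ‖q.1.1 - q.2.1‖ + |q.1.2 - q.2.2|) γ) :
    |popLoss ℓ h μ - popLoss ℓ h ν| ≤
      ρ * Real.sqrt (R ^ 2 + 1) * ∫ q, (‖q.1.1 - q.2.1‖ + |q.1.2 - q.2.2|) ∂γ := by
  -- continuity of h and ℓ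
  have hcont : Continuous h := by
    refine (LipschitzWith.of_dist_le_mul (K := Real.toNNReal R) (f := h) ?_).continuous
    intro x x'
    have := hLip x x'
    simp only [Real.dist_eq, dist_eq_norm]
    calc |h x - h x'| ≤ R * ‖x - x'‖ := this
      _ = (Real.toNNReal R : ℝ) * ‖x - x'‖ := by rw [Real.coe_toNNReal _ hR]
  have hℓcont : Continuous (fun p : ℝ × ℝ => ℓ p.1 p.2) := by
    refine (LipschitzWith.of_dist_le_mul (K := 2 * Real.toNNReal ρ) ?_).continuous
    rintro ⟨a, b⟩ ⟨a', b'⟩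
    have h1 := hℓ₁ a a' b
    have h2 := hℓ₂ b b' a'
    have hd1 : |a - a'| ≤ dist (a,b) (a',b') := by
      rw [← Real.dist_eq, Prod.dist_eq]; exact le_max_left _ _
    have hd2 : |b - b'| ≤ dist (a,b) (a',b') := by
      rw [← Real.dist_eq, Prod.dist_eq]; exact le_max_right _ _
    have hcoe : ((2 * Real.toNNReal ρ : NNReal) : ℝ) = 2 * ρ := by
      push_cast [Real.coe_toNNReal _ hρ]; ring
    rw [Real.dist_eq, hcoe]
    calc |ℓ a b - ℓ a' b'| ≤ |ℓ a b - ℓ a' b| + |ℓ a' b - ℓ a' b'| := abs_sub_le _ _ _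
      _ ≤ ρ * |a - a'| + ρ * |b - b'| := add_le_add h1 h2
      _ ≤ ρ * dist (a,b) (a',b') + ρ * dist (a,b) (a',b') := by
          exact add_le_add (mul_le_mul_of_nonneg_left hd1 hρ) (mul_le_mul_of_nonneg_left hd2 hρ)
      _ = 2 * ρ * dist (a,b) (a',b') := by ring
  have hfcont : Continuous (fun p : EuclideanSpace ℝ (Fin d) × ℝ => ℓ (h p.1) p.2) :=
    hℓcont.comp ((hcont.comp continuous_fst).prodMk continuous_snd)
  have e1 : popLoss ℓ h μ = ∫ q, ℓ (h q.1.1) q.1.2 ∂γ := by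
    rw [popLoss, ← hγ₁, integral_map measurable_fst.aemeasurable hfcont.aestronglyMeasurable]
  have e2 : popLoss ℓ h ν = ∫ q, ℓ (h q.2.1) q.2.2 ∂γ := by
    rw [popLoss, ← hγ₂, integral_map measurable_snd.aemeasurable hfcont.aestronglyMeasurable]
  set c := ρ * Real.sqrt (R ^ 2 + 1) with hc
  have hRle : R ≤ Real.sqrt (R ^ 2 + 1) := by
    have : R = Real.sqrt (R ^ 2) := by rw [Real.sqrt_sq hR]
    rw [this]; exact Real.sqrt_le_sqrt (by nlinarith)
  have h1le : (1 : ℝ) ≤ Real.sqrt (R ^ 2 + 1) := by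
    have : (1:ℝ) = Real.sqrt 1 := by simp
    rw [this]; exact Real.sqrt_le_sqrt (by nlinarith)
  have hpt : ∀ q : (EuclideanSpace ℝ (Fin d) × ℝ) × (EuclideanSpace ℝ (Fin d) × ℝ),
      |ℓ (h q.1.1) q.1.2 - ℓ (h q.2.1) q.2.2| ≤ c * (‖q.1.1 - q.2.1‖ + |q.1.2 - q.2.2|) := by
    rintro ⟨⟨x, y⟩, ⟨x', y'⟩⟩
    simp only
    have hn : (0:ℝ) ≤ ‖x - x'‖ := norm_nonneg _
    have ha : (0:ℝ) ≤ |y - y'| := abs_nonneg _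
    calc |ℓ (h x) y - ℓ (h x') y'|
        ≤ |ℓ (h x) y - ℓ (h x') y| + |ℓ (h x') y - ℓ (h x') y'| := abs_sub_le _ _ _
      _ ≤ ρ * |h x - h x'| + ρ * |y - y'| := add_le_add (hℓ₁ _ _ _) (hℓ₂ _ _ _)
      _ ≤ ρ * (R * ‖x - x'‖) + ρ * |y - y'| :=
          add_le_add (mul_le_mul_of_nonneg_left (hLip x x') hρ) le_rfl
      _ ≤ c * (‖x - x'‖ + |y - y'|) := by
          rw [hc]
          nlinarith [mul_le_mul_of_nonneg_right hRle hn, mul_le_mul_of_nonneg_right h1le ha,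
            mul_le_mul_of_nonneg_left (mul_le_mul_of_nonneg_right hRle hn) hρ,
            mul_le_mul_of_nonneg_left (mul_le_mul_of_nonneg_right h1le ha) hρ]
  rw [e1, e2, ← integral_sub hint₁ hint₂]
  calc |∫ q, (ℓ (h q.1.1) q.1.2 - ℓ (h q.2.1) q.2.2) ∂γ|
      ≤ ∫ q, |ℓ (h q.1.1) q.1.2 - ℓ (h q.2.1) q.2.2| ∂γ := by
        simpa [Real.norm_eq_abs] using norm_integral_le_integral_norm (μ := γ) (fun q => ℓ (h q.1.1) q.1.2 - ℓ (h q.2.1) q.2.2)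
    _ ≤ ∫ q, c * (‖q.1.1 - q.2.1‖ + |q.1.2 - q.2.2|) ∂γ :=
        integral_mono (hint₁.sub hint₂).abs (hintc.const_mul c) hpt
    _ = c * ∫ q, (‖q.1.1 - q.2.1‖ + |q.1.2 - q.2.2|) ∂γ := integral_const_mul _ _
end

section
/- Let μ and ν be probability measures on ℝ^d × ℝ, let h : ℝ^d → ℝ be R-Lipschitz, let ℓ : ℝ × ℝ → ℝ be ρ-Lipschitz in each argument, with R ≥ 0, ρ ≥ 0, and let p ≥ 1 be real. Let γ be any coupling of μ and ν such that ℓ(h(x), y) and ℓ(h(x'), y') are γ-integrable and the cost c((x,y),(x',y')) = ‖x − x'‖₂ + |y − y'| satisfies c^p is γ-integrable. Then |ε_μ(h) − ε_ν(h)| ≤ ρ·√(R² + 1)·(∫ c^p dγ)^{1/p}. -/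
open MeasureTheory

/-- If `g ∘ fst` is a.e. strongly measurable w.r.t. a finite measure on a product with a
standard Borel second factor, then `g` is a.e. strongly measurable w.r.t. the first marginal. -/
lemma aesm_of_comp_fst {α Ω : Type*} [MeasurableSpace α] [MeasurableSpace Ω]
    [StandardBorelSpace Ω] [Nonempty Ω] (γ : Measure (α × Ω)) [IsFiniteMeasure γ]
    {g : α → ℝ} (hg : AEStronglyMeasurable (fun q : α × Ω => g q.1) γ) :
    AEStronglyMeasurable g γ.fst := by
  have hdis := γ.disintegrate γ.condKernel
  rw [← hdis] at hg
  rw [Measure.compProd] at hg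
  have h2 := hg.integral_kernel_compProd
  simp only [ProbabilityTheory.Kernel.const_apply, ProbabilityTheory.Kernel.prodMkLeft_apply]
    at h2
  refine h2.congr (Filter.Eventually.of_forall fun x => ?_)
  have : IsProbabilityMeasure (γ.condKernel x) := inferInstance
  simp [integral_const]

/-- p-Wasserstein form of Lemma 4.1. -/
theorem error_difference_Wp_coupling_bound
    {d : ℕ} (R ρ p : ℝ) (hR : 0 ≤ R) (hρ : 0 ≤ ρ) (hp : 1 ≤ p)
    (μ ν : Measure (EuclideanSpace ℝ (Fin d) × ℝ))
    [IsProbabilityMeasure μ] [IsProbabilityMeasure ν]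
    (h : EuclideanSpace ℝ (Fin d) → ℝ) (ℓ : ℝ → ℝ → ℝ)
    (hLip : ∀ x x' : EuclideanSpace ℝ (Fin d), |h x - h x'| ≤ R * ‖x - x'‖)
    (hℓ₁ : ∀ y y' z : ℝ, |ℓ y z - ℓ y' z| ≤ ρ * |y - y'|)
    (hℓ₂ : ∀ y y' z : ℝ, |ℓ z y - ℓ z y'| ≤ ρ * |y - y'|)
    (γ : Measure ((EuclideanSpace ℝ (Fin d) × ℝ) × (EuclideanSpace ℝ (Fin d) × ℝ)))
    [IsProbabilityMeasure γ]
    (hγ₁ : γ.map Prod.fst = μ) (hγ₂ : γ.map Prod.snd = ν)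
    (hint₁ : Integrable (fun q => ℓ (h q.1.1) q.1.2) γ)
    (hint₂ : Integrable (fun q => ℓ (h q.2.1) q.2.2) γ)
    (hintc : Integrable (fun q => (‖q.1.1 - q.2.1‖ + |q.1.2 - q.2.2|) ^ p) γ) :
    |popLoss ℓ h μ - popLoss ℓ h ν| ≤
      ρ * Real.sqrt (R ^ 2 + 1) *
        (∫ q, (‖q.1.1 - q.2.1‖ + |q.1.2 - q.2.2|) ^ p ∂γ) ^ (1 / p) := by
  set P := EuclideanSpace ℝ (Fin d) × ℝ
  set g : P → ℝ := fun q => ℓ (h q.1) q.2 with hg_def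
  set c : P × P → ℝ := fun q => ‖q.1.1 - q.2.1‖ + |q.1.2 - q.2.2| with hc_def
  set K : ℝ := ρ * Real.sqrt (R ^ 2 + 1) with hK_def
  have hp0 : 0 < p := lt_of_lt_of_le one_pos hp
  have hs0 : (0:ℝ) ≤ Real.sqrt (R ^ 2 + 1) := Real.sqrt_nonneg _
  have hs2 : Real.sqrt (R ^ 2 + 1) ^ 2 = R ^ 2 + 1 :=
    Real.sq_sqrt (by positivity)
  have hsqrt1 : (1 : ℝ) ≤ Real.sqrt (R ^ 2 + 1) := by nlinarith
  have hsqrtR : R ≤ Real.sqrt (R ^ 2 + 1) := by nlinarith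
  have hK0 : 0 ≤ K := mul_nonneg hρ (le_trans zero_le_one hsqrt1)
  -- nonnegativity of cost
  have hc0 : ∀ q : P × P, 0 ≤ c q := fun q =>
    add_nonneg (norm_nonneg _) (abs_nonneg _)
  -- continuity of the cost
  have hc_cont : Continuous c := by
    apply Continuous.add
    · exact (continuous_fst.fst.sub continuous_snd.fst).norm
    · exact (continuous_fst.snd.sub continuous_snd.snd).abs
  -- Integrability of the cost
  have hc_int : Integrable c γ := by
    refine Integrable.mono' ((integrable_const (1:ℝ)).add hintc)
      hc_cont.aestronglyMeasurable (Filter.Eventually.of_forall fun q => ?_)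
    rw [Real.norm_of_nonneg (hc0 q)]
    have hbeta : ((fun _ : P × P => (1:ℝ)) +
        fun q : P × P => (‖q.1.1 - q.2.1‖ + |q.1.2 - q.2.2|) ^ p) q = 1 + c q ^ p := rfl
    rw [hbeta]
    rcases le_total (c q) 1 with hle | hle
    · have : (0:ℝ) ≤ c q ^ p := Real.rpow_nonneg (hc0 q) p
      linarith
    · calc c q = c q ^ (1:ℝ) := (Real.rpow_one _).symm
        _ ≤ c q ^ p := Real.rpow_le_rpow_of_exponent_le hle hp
        _ ≤ 1 + c q ^ p := le_add_of_nonneg_left zero_le_one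
  -- pointwise Lipschitz bound
  have hpt : ∀ q : P × P, |g q.1 - g q.2| ≤ K * c q := by
    intro ⟨⟨x, y⟩, ⟨x', y'⟩⟩
    simp only [hg_def, hc_def]
    have t1 : |ℓ (h x) y - ℓ (h x') y'| ≤
        |ℓ (h x) y - ℓ (h x') y| + |ℓ (h x') y - ℓ (h x') y'| := abs_sub_le _ _ _
    have t2 : |ℓ (h x) y - ℓ (h x') y| ≤ ρ * |h x - h x'| := hℓ₁ _ _ _
    have t3 : |ℓ (h x') y - ℓ (h x') y'| ≤ ρ * |y - y'| := hℓ₂ _ _ _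
    have t4 : |h x - h x'| ≤ R * ‖x - x'‖ := hLip _ _
    have t5 : ρ * |h x - h x'| ≤ ρ * (R * ‖x - x'‖) := mul_le_mul_of_nonneg_left t4 hρ
    have hn : (0:ℝ) ≤ ‖x - x'‖ := norm_nonneg _
    have ha : (0:ℝ) ≤ |y - y'| := abs_nonneg _
    have t6 : ρ * (R * ‖x - x'‖) ≤ ρ * (Real.sqrt (R ^ 2 + 1) * ‖x - x'‖) :=
      mul_le_mul_of_nonneg_left (mul_le_mul_of_nonneg_right hsqrtR hn) hρ
    have t7 : ρ * |y - y'| ≤ ρ * (Real.sqrt (R ^ 2 + 1) * |y - y'|) :=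
      mul_le_mul_of_nonneg_left (le_mul_of_one_le_left ha hsqrt1) hρ
    calc |ℓ (h x) y - ℓ (h x') y'|
        ≤ ρ * |h x - h x'| + ρ * |y - y'| := le_trans t1 (add_le_add t2 t3)
      _ ≤ ρ * (Real.sqrt (R ^ 2 + 1) * ‖x - x'‖) +
            ρ * (Real.sqrt (R ^ 2 + 1) * |y - y'|) :=
          add_le_add (le_trans t5 t6) t7
      _ = K * (‖x - x'‖ + |y - y'|) := by ring
  -- rewrite the population losses as integrals over γ
  have hfst : Measurable (Prod.fst : P × P → P) := measurable_fst
  have hsnd : Measurable (Prod.snd : P × P → P) := measurable_snd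
  have hgm₁ : AEStronglyMeasurable g (γ.map Prod.fst) := by
    have : AEStronglyMeasurable (fun q : P × P => g q.1) γ := hint₁.aestronglyMeasurable
    have := aesm_of_comp_fst γ this
    rwa [Measure.fst] at this
  have hgm₂ : AEStronglyMeasurable g (γ.map Prod.snd) := by
    set e : P × P ≃ᵐ P × P := MeasurableEquiv.prodComm with he
    have hswap : AEStronglyMeasurable (fun q : P × P => g q.1) (γ.map e) := by
      rw [e.measurableEmbedding.aestronglyMeasurable_map_iff]
      exact hint₂.aestronglyMeasurable
    have h' := aesm_of_comp_fst _ hswap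
    rw [Measure.fst, Measure.map_map hfst e.measurable] at h'
    have hcomp : (Prod.fst ∘ ⇑e) = (Prod.snd : P × P → P) := rfl
    rwa [hcomp] at h'
  have e₁ : popLoss ℓ h μ = ∫ q, g q.1 ∂γ := by
    rw [popLoss, ← hγ₁, integral_map hfst.aemeasurable hgm₁]
  have e₂ : popLoss ℓ h ν = ∫ q, g q.2 ∂γ := by
    rw [popLoss, ← hγ₂, integral_map hsnd.aemeasurable hgm₂]
  rw [e₁, e₂, ← integral_sub hint₁ hint₂]
  -- bound by K * ∫ c
  have step1 : |∫ q, (g q.1 - g q.2) ∂γ| ≤ K * ∫ q, c q ∂γ := by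
    calc |∫ q, (g q.1 - g q.2) ∂γ| ≤ ∫ q, |g q.1 - g q.2| ∂γ := by
          simpa [Real.norm_eq_abs] using
            norm_integral_le_integral_norm (fun q => g q.1 - g q.2) (μ := γ)
      _ ≤ ∫ q, K * c q ∂γ :=
          integral_mono (hint₁.sub hint₂).abs (hc_int.const_mul K)
            (fun q => hpt q)
      _ = K * ∫ q, c q ∂γ := integral_const_mul K _
  -- Jensen: (∫ c)^p ≤ ∫ c^p, hence ∫ c ≤ (∫ c^p)^(1/p)
  have hI0 : 0 ≤ ∫ q, c q ∂γ := integral_nonneg fun q => hc0 q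
  have hJ0 : 0 ≤ ∫ q, c q ^ p ∂γ :=
    integral_nonneg fun q => Real.rpow_nonneg (hc0 q) p
  have jensen : (∫ q, c q ∂γ) ^ p ≤ ∫ q, c q ^ p ∂γ := by
    have hconv : ConvexOn ℝ (Set.Ici (0:ℝ)) fun x : ℝ => x ^ p := convexOn_rpow hp
    have hcont : ContinuousOn (fun x : ℝ => x ^ p) (Set.Ici 0) := fun x hx =>
      (Real.continuousAt_rpow_const x p (Or.inr (le_of_lt hp0))).continuousWithinAt
    exact hconv.map_integral_le hcont isClosed_Ici
      (Filter.Eventually.of_forall fun q => hc0 q) hc_int hintc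
  have step2 : (∫ q, c q ∂γ) ≤ (∫ q, c q ^ p ∂γ) ^ (1 / p) := by
    have h1 : ((∫ q, c q ∂γ) ^ p) ^ (1/p) ≤ (∫ q, c q ^ p ∂γ) ^ (1/p) :=
      Real.rpow_le_rpow (Real.rpow_nonneg hI0 p) jensen (le_of_lt (one_div_pos.mpr hp0))
    rw [one_div]
    rwa [one_div, Real.rpow_rpow_inv hI0 (ne_of_gt hp0)] at h1
  calc |∫ q, (g q.1 - g q.2) ∂γ| ≤ K * ∫ q, c q ∂γ := step1
    _ ≤ K * (∫ q, c q ^ p ∂γ) ^ (1/p) := mul_le_mul_of_nonneg_left step2 hK0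
end

section
/- Let Δ ≥ 0 and n > 0 be reals, define f : (0, ∞) → ℝ by f(T) = Δ·T + T/√n + 1/√(n·T), and set T* = (2·(1 + Δ·√n))^{−2/3}. Then T* is the unique global minimizer of f on (0, ∞): f'(T*) = 0, and for every T > 0 with T ≠ T*, f(T) > f(T*). -/
/-- the optimal number of steps T* (Appendix A.5 of the paper). -/
theorem optimal_T_unique_global_minimizer
    (Δ n : ℝ) (hΔ : 0 ≤ Δ) (hn : 0 < n) :
    HasDerivAt (fun T : ℝ => Δ * T + T / Real.sqrt n + 1 / Real.sqrt (n * T)) 0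
      ((2 * (1 + Δ * Real.sqrt n)) ^ (-(2 : ℝ) / 3)) ∧
    ∀ T : ℝ, 0 < T → T ≠ (2 * (1 + Δ * Real.sqrt n)) ^ (-(2 : ℝ) / 3) →
      Δ * ((2 * (1 + Δ * Real.sqrt n)) ^ (-(2 : ℝ) / 3))
        + ((2 * (1 + Δ * Real.sqrt n)) ^ (-(2 : ℝ) / 3)) / Real.sqrt n
        + 1 / Real.sqrt (n * ((2 * (1 + Δ * Real.sqrt n)) ^ (-(2 : ℝ) / 3)))
      < Δ * T + T / Real.sqrt n + 1 / Real.sqrt (n * T) := by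
  have hsn : 0 < Real.sqrt n := Real.sqrt_pos.mpr hn
  set sn := Real.sqrt n with hsn_def
  have hb : 0 < 2 * (1 + Δ * sn) := by nlinarith [mul_nonneg hΔ hsn.le]
  set b := 2 * (1 + Δ * sn) with hb_def
  set s : ℝ := b ^ (-(1 : ℝ)/3) with hs_def
  have hs : 0 < s := Real.rpow_pos_of_pos hb _
  have hTs : b ^ (-(2 : ℝ)/3) = s ^ 2 := by
    rw [hs_def, ← Real.rpow_natCast (b ^ (-(1:ℝ)/3)) 2, ← Real.rpow_mul hb.le]
    norm_num
  have hkey : s ^ 3 * b = 1 := by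
    rw [hs_def, ← Real.rpow_natCast (b ^ (-(1:ℝ)/3)) 3, ← Real.rpow_mul hb.le]
    norm_num
    rw [Real.rpow_neg_one]
    field_simp
  have hTspos : 0 < b ^ (-(2 : ℝ)/3) := by rw [hTs]; positivity
  have hsqrtTs : Real.sqrt (b ^ (-(2 : ℝ)/3)) = s := by rw [hTs, Real.sqrt_sq hs.le]
  -- rewrite sqrt (n * T) = sn * sqrt T
  have hrw : ∀ T : ℝ, Real.sqrt (n * T) = sn * Real.sqrt T := fun T => Real.sqrt_mul hn.le T
  constructor
  · have h3 : HasDerivAt (fun T : ℝ => (sn * Real.sqrt T)⁻¹)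
        (-(sn * (1 / (2 * Real.sqrt (b ^ (-(2 : ℝ)/3))))) / (sn * Real.sqrt (b ^ (-(2 : ℝ)/3))) ^ 2)
        (b ^ (-(2 : ℝ)/3)) := by
      exact ((Real.hasDerivAt_sqrt hTspos.ne').const_mul sn).inv
        (by rw [hsqrtTs]; positivity)
    have h1 : HasDerivAt (fun T : ℝ => Δ * T + T / sn + (sn * Real.sqrt T)⁻¹)
        (Δ + 1 / sn + -(sn * (1 / (2 * Real.sqrt (b ^ (-(2 : ℝ)/3))))) / (sn * Real.sqrt (b ^ (-(2 : ℝ)/3))) ^ 2)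
        (b ^ (-(2 : ℝ)/3)) := by
      have ha : HasDerivAt (fun T : ℝ => Δ * T) Δ (b ^ (-(2 : ℝ)/3)) := by
        simpa using (hasDerivAt_id (b ^ (-(2 : ℝ)/3))).const_mul Δ
      have hc : HasDerivAt (fun T : ℝ => T / sn) (1 / sn) (b ^ (-(2 : ℝ)/3)) := by
        simpa using (hasDerivAt_id (b ^ (-(2 : ℝ)/3))).div_const sn
      exact (ha.add hc).add h3
    have heq : (fun T : ℝ => Δ * T + T / sn + 1 / Real.sqrt (n * T))
        = (fun T : ℝ => Δ * T + T / sn + (sn * Real.sqrt T)⁻¹) := by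
      funext T; rw [hrw T, one_div]
    rw [heq]
    convert h1 using 1
    rw [hsqrtTs]
    have hsne : sn ≠ 0 := hsn.ne'
    have hse : s ≠ 0 := hs.ne'
    have hkey' : s ^ 3 * (2 * (1 + Δ * sn)) = 1 := by rw [← hb_def]; exact hkey
    field_simp
    linear_combination (-1) * hkey'
  · intro T hT hne
    have ht : 0 < Real.sqrt T := Real.sqrt_pos.mpr hT
    set t := Real.sqrt T with ht_def
    have hT2 : t ^ 2 = T := Real.sq_sqrt hT.le
    have htne : t ≠ s := by
      intro h
      apply hne
      rw [← hT2, h, ← hTs]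
    rw [hrw, hrw, hsqrtTs, ← ht_def, hTs, ← hT2]
    have hkey' : s ^ 3 * (2 * (1 + Δ * sn)) = 1 := by rw [← hb_def]; exact hkey
    have hts2 : 0 < (t - s) ^ 2 :=
      lt_of_le_of_ne (sq_nonneg _) (Ne.symm (pow_ne_zero _ (sub_ne_zero.mpr htne)))
    have e : (Δ * t ^ 2 + t ^ 2 / sn + 1 / (sn * t)) - (Δ * s ^ 2 + s ^ 2 / sn + 1 / (sn * s))
        = (1 + Δ * sn) * (t - s) ^ 2 * (t + 2 * s) / (sn * t) := by
      rw [eq_div_iff (by positivity : sn * t ≠ 0)]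
      field_simp
      ring_nf
      linear_combination (t - s) * hkey'
    have hpos : 0 < (1 + Δ * sn) * (t - s) ^ 2 * (t + 2 * s) / (sn * t) := by
      have h1 : 0 < 1 + Δ * sn := by nlinarith [mul_nonneg hΔ hsn.le]
      positivity
    linarith [e ▸ hpos]
end

section
/- Let T ≥ 1 be an integer, let μ₀, μ₁, …, μ_T be probability measures on ℝ^d × ℝ, let h : ℝ^d → ℝ be R-Lipschitz, and let ℓ : ℝ × ℝ → ℝ be ρ-Lipschitz in each argument, with R ≥ 0, ρ ≥ 0. For each t ∈ {1, …, T}, let γ_t be a coupling of μ_{t−1} and μ_t such that ℓ(h(x), y), ℓ(h(x'), y') and the cost c((x,y),(x',y')) = ‖x − x'‖₂ + |y − y'| are γ_t-integrable. Then |ε_{μ₀}(h) − ε_{μ_T}(h)| ≤ ρ·√(R² + 1)·Σ_{t=1}^T ∫ c dγ_t. -/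
open MeasureTheory

/-- Integral of a function of the first coordinate against the first marginal. -/
lemma integral_fst_marginal' {α Ω : Type*} [MeasurableSpace α] [MeasurableSpace Ω]
    [StandardBorelSpace Ω] [Nonempty Ω]
    (ρ : Measure (α × Ω)) [IsFiniteMeasure ρ] (g : α → ℝ)
    (hg : Integrable (fun q : α × Ω => g q.1) ρ) :
    ∫ x, g x ∂(ρ.map Prod.fst) = ∫ q, g q.1 ∂ρ := by
  have h1 := MeasureTheory.Measure.integral_condKernel (ρ := ρ) (f := fun q => g q.1) hg
  have h2 : ∀ b, ∫ ω, g b ∂(ρ.condKernel b) = g b := by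
    intro b; simp
  simp only [h2] at h1
  simpa [Measure.fst] using h1

/-- Integral of a function of the second coordinate against the second marginal. -/
lemma integral_snd_marginal' {α Ω : Type*} [MeasurableSpace α] [MeasurableSpace Ω]
    [StandardBorelSpace α] [Nonempty α]
    (ρ : Measure (α × Ω)) [IsFiniteMeasure ρ] (g : Ω → ℝ)
    (hg : Integrable (fun q : α × Ω => g q.2) ρ) :
    ∫ x, g x ∂(ρ.map Prod.snd) = ∫ q, g q.2 ∂ρ := by
  set e : α × Ω ≃ᵐ Ω × α := MeasurableEquiv.prodComm with he
  have hswap : (ρ.map e).map Prod.fst = ρ.map Prod.snd := by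
    rw [Measure.map_map measurable_fst e.measurable]
    rfl
  have hint : Integrable (fun q : Ω × α => g q.1) (ρ.map e) := by
    rw [integrable_map_equiv e]
    exact hg
  have := integral_fst_marginal' (ρ.map e) g hint
  rw [hswap] at this
  rw [this, integral_map_equiv]
  rfl

/-- telescoped form of Lemma 4.1 along a path of domains μ₀, …, μ_T. -/
theorem error_difference_telescoped_along_path
    {d : ℕ} (T : ℕ) (hT : 1 ≤ T) (R ρ : ℝ) (hR : 0 ≤ R) (hρ : 0 ≤ ρ)
    (μ : ℕ → Measure (EuclideanSpace ℝ (Fin d) × ℝ))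
    (hprob : ∀ t ≤ T, IsProbabilityMeasure (μ t))
    (h : EuclideanSpace ℝ (Fin d) → ℝ) (ℓ : ℝ → ℝ → ℝ)
    (hLip : ∀ x x' : EuclideanSpace ℝ (Fin d), |h x - h x'| ≤ R * ‖x - x'‖)
    (hℓ₁ : ∀ y y' z : ℝ, |ℓ y z - ℓ y' z| ≤ ρ * |y - y'|)
    (hℓ₂ : ∀ y y' z : ℝ, |ℓ z y - ℓ z y'| ≤ ρ * |y - y'|)
    (γ : ℕ → Measure ((EuclideanSpace ℝ (Fin d) × ℝ) × (EuclideanSpace ℝ (Fin d) × ℝ)))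
    (hγprob : ∀ t < T, IsProbabilityMeasure (γ t))
    (hγ₁ : ∀ t < T, (γ t).map Prod.fst = μ t)
    (hγ₂ : ∀ t < T, (γ t).map Prod.snd = μ (t + 1))
    (hint₁ : ∀ t < T, Integrable (fun q => ℓ (h q.1.1) q.1.2) (γ t))
    (hint₂ : ∀ t < T, Integrable (fun q => ℓ (h q.2.1) q.2.2) (γ t))
    (hintc : ∀ t < T, Integrable (fun q => ‖q.1.1 - q.2.1‖ + |q.1.2 - q.2.2|) (γ t)) :
    |popLoss ℓ h (μ 0) - popLoss ℓ h (μ T)| ≤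
      ρ * Real.sqrt (R ^ 2 + 1) *
        ∑ t ∈ Finset.range T, ∫ q, (‖q.1.1 - q.2.1‖ + |q.1.2 - q.2.2|) ∂(γ t) := by
  set K := ρ * Real.sqrt (R ^ 2 + 1) with hK
  have hsq : Real.sqrt (R ^ 2 + 1) ^ 2 = R ^ 2 + 1 := Real.sq_sqrt (by positivity)
  have hsqnn : 0 ≤ Real.sqrt (R ^ 2 + 1) := Real.sqrt_nonneg _
  have hsqrt1 : (1 : ℝ) ≤ Real.sqrt (R ^ 2 + 1) := by nlinarith
  have hsqrtR : R ≤ Real.sqrt (R ^ 2 + 1) := by nlinarith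
  have hKnn : 0 ≤ K := mul_nonneg hρ hsqnn
  -- single-step bound
  have step : ∀ t, t < T →
      |popLoss ℓ h (μ t) - popLoss ℓ h (μ (t + 1))| ≤
        K * ∫ q, (‖q.1.1 - q.2.1‖ + |q.1.2 - q.2.2|) ∂(γ t) := by
    intro t ht
    haveI := hγprob t ht
    have e1 : popLoss ℓ h (μ t) = ∫ q, ℓ (h q.1.1) q.1.2 ∂(γ t) := by
      rw [popLoss, ← hγ₁ t ht]
      exact integral_fst_marginal' (γ t) (fun p => ℓ (h p.1) p.2) (hint₁ t ht)
    have e2 : popLoss ℓ h (μ (t + 1)) = ∫ q, ℓ (h q.2.1) q.2.2 ∂(γ t) := by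
      rw [popLoss, ← hγ₂ t ht]
      exact integral_snd_marginal' (γ t) (fun p => ℓ (h p.1) p.2) (hint₂ t ht)
    rw [e1, e2, ← integral_sub (hint₁ t ht) (hint₂ t ht)]
    calc |∫ q, (ℓ (h q.1.1) q.1.2 - ℓ (h q.2.1) q.2.2) ∂(γ t)|
        ≤ ∫ q, |ℓ (h q.1.1) q.1.2 - ℓ (h q.2.1) q.2.2| ∂(γ t) :=
          by simpa [Real.norm_eq_abs] using
            norm_integral_le_integral_norm
              (fun q : (EuclideanSpace ℝ (Fin d) × ℝ) × (EuclideanSpace ℝ (Fin d) × ℝ) =>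
                ℓ (h q.1.1) q.1.2 - ℓ (h q.2.1) q.2.2) (μ := γ t)
      _ ≤ ∫ q, K * (‖q.1.1 - q.2.1‖ + |q.1.2 - q.2.2|) ∂(γ t) := by
          refine integral_mono ((hint₁ t ht).sub (hint₂ t ht)).abs
            ((hintc t ht).const_mul K) ?_
          intro q
          have h1 : |ℓ (h q.1.1) q.1.2 - ℓ (h q.2.1) q.1.2| ≤ ρ * |h q.1.1 - h q.2.1| :=
            hℓ₁ _ _ _
          have h2 : |ℓ (h q.2.1) q.1.2 - ℓ (h q.2.1) q.2.2| ≤ ρ * |q.1.2 - q.2.2| :=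
            hℓ₂ _ _ _
          have h3 : |h q.1.1 - h q.2.1| ≤ R * ‖q.1.1 - q.2.1‖ := hLip _ _
          have htri : |ℓ (h q.1.1) q.1.2 - ℓ (h q.2.1) q.2.2| ≤
              |ℓ (h q.1.1) q.1.2 - ℓ (h q.2.1) q.1.2| +
              |ℓ (h q.2.1) q.1.2 - ℓ (h q.2.1) q.2.2| := abs_sub_le _ _ _
          have hnn1 : (0 : ℝ) ≤ ‖q.1.1 - q.2.1‖ := norm_nonneg _
          have hnn2 : (0 : ℝ) ≤ |q.1.2 - q.2.2| := abs_nonneg _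
          simp only
          rw [hK]
          nlinarith [mul_le_mul_of_nonneg_left h3 hρ,
            mul_le_mul_of_nonneg_right (mul_le_mul_of_nonneg_left hsqrtR hρ) hnn1,
            mul_le_mul_of_nonneg_right (mul_le_mul_of_nonneg_left hsqrt1 hρ) hnn2]
      _ = K * ∫ q, (‖q.1.1 - q.2.1‖ + |q.1.2 - q.2.2|) ∂(γ t) :=
          integral_const_mul _ _
  -- telescoping
  have main : ∀ n, n ≤ T →
      |popLoss ℓ h (μ 0) - popLoss ℓ h (μ n)| ≤
        K * ∑ t ∈ Finset.range n, ∫ q, (‖q.1.1 - q.2.1‖ + |q.1.2 - q.2.2|) ∂(γ t) := by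
    intro n
    induction n with
    | zero => intro _; simp
    | succ n ih =>
        intro hn
        have hn' : n ≤ T := Nat.le_of_succ_le hn
        have hlt : n < T := hn
        calc |popLoss ℓ h (μ 0) - popLoss ℓ h (μ (n + 1))|
            ≤ |popLoss ℓ h (μ 0) - popLoss ℓ h (μ n)| +
              |popLoss ℓ h (μ n) - popLoss ℓ h (μ (n + 1))| := by
              have := abs_sub_le (popLoss ℓ h (μ 0)) (popLoss ℓ h (μ n))
                (popLoss ℓ h (μ (n + 1)))
              linarith
          _ ≤ K * ∑ t ∈ Finset.range n, ∫ q, (‖q.1.1 - q.2.1‖ + |q.1.2 - q.2.2|) ∂(γ t)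
              + K * ∫ q, (‖q.1.1 - q.2.1‖ + |q.1.2 - q.2.2|) ∂(γ n) :=
              add_le_add (ih hn') (step n hlt)
          _ = K * ∑ t ∈ Finset.range (n + 1),
                ∫ q, (‖q.1.1 - q.2.1‖ + |q.1.2 - q.2.2|) ∂(γ t) := by
              rw [Finset.sum_range_succ, mul_add]
  exact main T le_rfl
end
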